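/- If P is a generic p×q transportation polytope (i.e., ∑_{i∈Y} u_i ≠ ∑_{j∈Z} v_j for all nonempty proper subsets Y ⊊ [p], Z ⊊ [q]), then a point x ∈ P is a vertex of P if and only if |supp(x)| = p+q-1, where supp(x) = {(i,j) : x_{i,j} > 0}. -/

import Mathlib

open Finset

/-- The `p × q` classical transportation polytope defined by marginals `u` and `v`. -/
def transportationPolytope (p q : ℕ) (u : Fin p → ℝ) (v : Fin q → ℝ) :
    Set (Matrix (Fin p) (Fin q) ℝ) :=
  {x | (∀ i j, 0 ≤ x i j) ∧ (∀ i, ∑ j, x i j = u i) ∧ (∀ j, ∑ i, x i j = v j)}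


private def margMap (p q : ℕ) : Matrix (Fin p) (Fin q) ℝ →ₗ[ℝ] (Fin p → ℝ) × (Fin q → ℝ) where
  toFun d := (fun i => ∑ j, d i j, fun j => ∑ i, d i j)
  map_add' d e := by
    refine Prod.ext ?_ ?_ <;> funext k <;> simp [Finset.sum_add_distrib]
  map_smul' c d := by
    refine Prod.ext ?_ ?_ <;> funext k <;> simp [Finset.mul_sum]

private def extMap {p q : ℕ} (S : Finset (Fin p × Fin q)) :
    (↥S → ℝ) →ₗ[ℝ] Matrix (Fin p) (Fin q) ℝ where
  toFun f := Matrix.of fun i j => if h : (i, j) ∈ S then f ⟨(i, j), h⟩ else 0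
  map_add' f g := by
    ext i j
    by_cases h : (i, j) ∈ S <;> simp [h]
  map_smul' c f := by
    ext i j
    by_cases h : (i, j) ∈ S <;> simp [h]

private def sumDiff (p q : ℕ) : ((Fin p → ℝ) × (Fin q → ℝ)) →ₗ[ℝ] ℝ where
  toFun ab := ∑ i, ab.1 i - ∑ j, ab.2 j
  map_add' a b := by simp [Finset.sum_add_distrib]; ring
  map_smul' c a := by simp [Finset.mul_sum, mul_sub]


open Module in
private theorem key_lemma (p q : ℕ) (hp : 0 < p) (hq : 0 < q) (S : Finset (Fin p × Fin q))
    (hsplit : ∀ Y : Finset (Fin p), ∀ Z : Finset (Fin q),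
      (∀ ij ∈ S, (ij.1 ∈ Y ↔ ij.2 ∈ Z)) → (Y = univ ∧ Z = univ) ∨ (Y = ∅ ∧ Z = ∅)) :
    (∀ d : Matrix (Fin p) (Fin q) ℝ, (∀ i j, (i, j) ∉ S → d i j = 0) →
      (∀ i, ∑ j, d i j = 0) → (∀ j, ∑ i, d i j = 0) → d = 0) ↔ S.card = p + q - 1 := by
  classical
  set Φ : (↥S → ℝ) →ₗ[ℝ] (Fin p → ℝ) × (Fin q → ℝ) := (margMap p q).comp (extMap S) with hΦ
  set H : Submodule ℝ ((Fin p → ℝ) × (Fin q → ℝ)) := LinearMap.ker (sumDiff p q) with hH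
  -- range Φ = H
  have hrange : LinearMap.range Φ = H := by
    apply le_antisymm
    · rintro w ⟨f, rfl⟩
      rw [hH, LinearMap.mem_ker]
      show sumDiff p q (margMap p q (extMap S f)) = 0
      have : ∑ i, ∑ j, extMap S f i j = ∑ j, ∑ i, extMap S f i j := Finset.sum_comm
      simp only [sumDiff, margMap, LinearMap.coe_mk, AddHom.coe_mk]
      rw [this]
      ring
    · intro ab hab
      by_contra hnab
      obtain ⟨φ, hφab, hφmap⟩ := Submodule.exists_dual_map_eq_bot_of_notMem hnab inferInstance
      have hφR : ∀ w ∈ LinearMap.range Φ, φ w = 0 := by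
        intro w hw
        have h3 : φ w ∈ (LinearMap.range Φ).map φ := Submodule.mem_map_of_mem hw
        rwa [hφmap, Submodule.mem_bot] at h3
      set lam : Fin p → ℝ := fun i => φ ((Pi.single i 1 : Fin p → ℝ), (0 : Fin q → ℝ)) with hlamdef
      set mu : Fin q → ℝ := fun j => φ ((0 : Fin p → ℝ), (Pi.single j 1 : Fin q → ℝ)) with hmudef
      have hdecomp : ∀ cd : (Fin p → ℝ) × (Fin q → ℝ),
          φ cd = ∑ i, cd.1 i * lam i + ∑ j, cd.2 j * mu j := by
        intro cd
        have h1 : cd = (∑ i, cd.1 i • ((Pi.single i 1 : Fin p → ℝ), (0 : Fin q → ℝ)))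
            + ∑ j, cd.2 j • ((0 : Fin p → ℝ), (Pi.single j 1 : Fin q → ℝ)) := by
          refine Prod.ext ?_ ?_ <;>
            simp [Prod.fst_sum, Prod.snd_sum, ← Pi.single_smul, Finset.univ_sum_single]
        conv_lhs => rw [h1]
        rw [map_add, map_sum, map_sum]
        simp only [map_smul, smul_eq_mul]
        rfl
      have hSlam : ∀ ij ∈ S, lam ij.1 + mu ij.2 = 0 := by
        rintro ⟨i, j⟩ hij
        have h0 := hφR _ (LinearMap.mem_range_self Φ (Pi.single (⟨(i, j), hij⟩ : ↥S) 1))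
        have hE : extMap S (Pi.single (⟨(i, j), hij⟩ : ↥S) (1 : ℝ))
            = Matrix.of fun i' j' => if i' = i ∧ j' = j then (1 : ℝ) else 0 := by
          funext i' j'
          by_cases h' : (i', j') ∈ S
          · simp [extMap, h', Pi.single_apply, Subtype.ext_iff, Prod.ext_iff]
          · have hne : ¬(i' = i ∧ j' = j) := by rintro ⟨rfl, rfl⟩; exact h' hij
            simp [extMap, h', hne]
        have hcomp : Φ (Pi.single (⟨(i, j), hij⟩ : ↥S) (1 : ℝ))
            = ((Pi.single i 1 : Fin p → ℝ), (Pi.single j 1 : Fin q → ℝ)) := by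
          show margMap p q (extMap S _) = _
          rw [hE]
          refine Prod.ext ?_ ?_ <;> funext k <;>
            simp [margMap, Pi.single_apply, Finset.sum_ite_eq, ite_and]
        rw [hcomp] at h0
        have h4 : ((Pi.single i 1 : Fin p → ℝ), (Pi.single j 1 : Fin q → ℝ))
            = ((Pi.single i 1 : Fin p → ℝ), (0 : Fin q → ℝ))
              + ((0 : Fin p → ℝ), (Pi.single j 1 : Fin q → ℝ)) := by
          simp
        rw [h4, map_add] at h0
        exact h0
      -- constancy of lam and mu via the no-split hypothesis
      set Y : Finset (Fin p) := univ.filter fun i => lam i = lam ⟨0, hp⟩ with hYdef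
      set Z : Finset (Fin q) := univ.filter fun j => mu j = -lam ⟨0, hp⟩ with hZdef
      have hYZ : ∀ ij ∈ S, (ij.1 ∈ Y ↔ ij.2 ∈ Z) := by
        rintro ⟨i, j⟩ hij
        have h5 := hSlam (i, j) hij
        simp only [hYdef, hZdef, mem_filter, mem_univ, true_and]
        constructor
        · intro h6; dsimp only at h5 ⊢; linarith
        · intro h6; dsimp only at h5 ⊢; linarith
      rcases hsplit Y Z hYZ with ⟨hYu, hZu⟩ | ⟨hY0, _⟩
      · have hlamc : ∀ i, lam i = lam ⟨0, hp⟩ := by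
          intro i
          have : i ∈ Y := hYu.symm ▸ mem_univ i
          exact (mem_filter.1 this).2
        have hmuc : ∀ j, mu j = -lam ⟨0, hp⟩ := by
          intro j
          have : j ∈ Z := hZu.symm ▸ mem_univ j
          exact (mem_filter.1 this).2
        have hz : ∑ i, ab.1 i - ∑ j, ab.2 j = 0 := hab
        have h7 : φ ab = 0 := by
          rw [hdecomp]
          simp_rw [hlamc, hmuc]
          rw [← Finset.sum_mul, ← Finset.sum_mul]
          linear_combination lam ⟨0, hp⟩ * hz
        exact hφab h7
      · have : (⟨0, hp⟩ : Fin p) ∈ Y := by simp [hYdef]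
        rw [hY0] at this
        exact absurd this (notMem_empty _)
  -- rank-nullity for Φ
  have hrn : finrank ℝ H + finrank ℝ (LinearMap.ker Φ) = S.card := by
    have h1 := LinearMap.finrank_range_add_finrank_ker Φ
    rw [hrange, Module.finrank_pi, Fintype.card_coe] at h1
    exact h1
  -- finrank H
  have hHr : finrank ℝ H + 1 = p + q := by
    have h2 := LinearMap.finrank_range_add_finrank_ker (sumDiff p q)
    have hr : LinearMap.range (sumDiff p q) = ⊤ := by
      rw [LinearMap.range_eq_top]
      intro r
      refine ⟨((fun i => if i = ⟨0, hp⟩ then r else 0 : Fin p → ℝ), 0), ?_⟩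
      simp [sumDiff]
    rw [hr, finrank_top, finrank_self, Module.finrank_prod, Module.finrank_fin_fun,
      Module.finrank_fin_fun] at h2
    rw [hH, ← h2, add_comm]
  -- the kernel condition is equivalent to the matrix condition
  have hker : (∀ d : Matrix (Fin p) (Fin q) ℝ, (∀ i j, (i, j) ∉ S → d i j = 0) →
      (∀ i, ∑ j, d i j = 0) → (∀ j, ∑ i, d i j = 0) → d = 0) ↔ LinearMap.ker Φ = ⊥ := by
    constructor
    · intro hD
      rw [LinearMap.ker_eq_bot']
      intro f hf
      have hf' : margMap p q (extMap S f) = 0 := hf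
      have hd0 : extMap S f = 0 := by
        apply hD
        · intro i j hij
          simp [extMap, hij]
        · intro i
          exact congrFun (congrArg Prod.fst hf') i
        · intro j
          exact congrFun (congrArg Prod.snd hf') j
      funext s
      obtain ⟨⟨i, j⟩, hs⟩ := s
      have h2 := congrFun (congrFun hd0 i) j
      simpa [extMap, hs] using h2
    · intro hk d hsupp hrow hcol
      set f : ↥S → ℝ := fun s => d s.1.1 s.1.2 with hfdef
      have hext : extMap S f = d := by
        funext i j
        by_cases h : (i, j) ∈ S
        · simp [extMap, hfdef, h]
        · simp [extMap, h, hsupp i j h]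
      have hfk : f ∈ LinearMap.ker Φ := by
        rw [LinearMap.mem_ker]
        show margMap p q (extMap S f) = 0
        rw [hext]
        refine Prod.ext ?_ ?_ <;> funext k <;> simp [margMap, hrow, hcol]
      rw [hk, Submodule.mem_bot] at hfk
      rw [← hext, hfk, map_zero]
  rw [hker]
  constructor
  · intro h
    rw [h, finrank_bot] at hrn
    omega
  · intro h
    rw [← Submodule.finrank_eq_zero (R := ℝ)]
    omega


private theorem extreme_iff_aux (p q : ℕ) (u : Fin p → ℝ) (v : Fin q → ℝ)
    (x : Matrix (Fin p) (Fin q) ℝ) (hx : x ∈ transportationPolytope p q u v) :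
    x ∈ Set.extremePoints ℝ (transportationPolytope p q u v) ↔
      ∀ d : Matrix (Fin p) (Fin q) ℝ, (∀ i j, ¬0 < x i j → d i j = 0) →
        (∀ i, ∑ j, d i j = 0) → (∀ j, ∑ i, d i j = 0) → d = 0 := by
  classical
  obtain ⟨hxpos, hxrow, hxcol⟩ := hx
  constructor
  · rintro ⟨-, hext⟩ d hsupp hrow hcol
    set T : Finset (Fin p × Fin q) := univ.filter fun ij => 0 < x ij.1 ij.2 with hTdef
    rcases T.eq_empty_or_nonempty with hT | hT
    · funext i j
      refine hsupp i j fun hpos => ?_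
      have : (i, j) ∈ T := by simp [hTdef, hpos]
      rw [hT] at this
      exact absurd this (notMem_empty _)
    · set m : ℝ := T.inf' hT fun ij => x ij.1 ij.2 with hmdef
      set M : ℝ := T.sup' hT fun ij => |d ij.1 ij.2| with hMdef
      have hm : 0 < m := by
        rw [hmdef, Finset.lt_inf'_iff]
        intro ij hij
        exact (mem_filter.1 hij).2
      have hM0 : 0 ≤ M := by
        obtain ⟨t, ht⟩ := hT
        rw [hMdef]
        exact le_trans (abs_nonneg (d t.1 t.2)) (Finset.le_sup' (fun ij => |d ij.1 ij.2|) ht)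
      set ε : ℝ := m / (M + 1) with hεdef
      have hε : 0 < ε := div_pos hm (by linarith)
      have hbound : ∀ i j, ε * |d i j| ≤ x i j := by
        intro i j
        by_cases hpos : 0 < x i j
        · have hij : (i, j) ∈ T := by simp [hTdef, hpos]
          calc ε * |d i j| ≤ ε * M :=
                mul_le_mul_of_nonneg_left (Finset.le_sup' (fun ij => |d ij.1 ij.2|) hij) hε.le
            _ ≤ m := by
                rw [hεdef, div_mul_eq_mul_div, div_le_iff₀ (by linarith : (0:ℝ) < M + 1)]
                nlinarith
            _ ≤ x i j := Finset.inf'_le _ hij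
        · rw [hsupp i j hpos]
          simpa using (hxpos i j)
      have habs : ∀ i j, -(ε * |d i j|) ≤ ε * d i j ∧ ε * d i j ≤ ε * |d i j| := by
        intro i j
        constructor
        · nlinarith [neg_abs_le (d i j), hε.le]
        · nlinarith [le_abs_self (d i j), hε.le]
      have hy : x + ε • d ∈ transportationPolytope p q u v := by
        refine ⟨?_, ?_, ?_⟩
        · intro i j
          have h1 := (habs i j).1
          have h2 := hbound i j
          simp only [Matrix.add_apply, Matrix.smul_apply, smul_eq_mul]
          linarith
        · intro i
          simp [Finset.sum_add_distrib, ← Finset.mul_sum, hxrow i, hrow i]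
        · intro j
          simp [Finset.sum_add_distrib, ← Finset.mul_sum, hxcol j, hcol j]
      have hz : x - ε • d ∈ transportationPolytope p q u v := by
        refine ⟨?_, ?_, ?_⟩
        · intro i j
          have h1 := (habs i j).2
          have h2 := hbound i j
          simp only [Matrix.sub_apply, Matrix.smul_apply, smul_eq_mul]
          linarith
        · intro i
          simp [Finset.sum_sub_distrib, ← Finset.mul_sum, hxrow i, hrow i]
        · intro j
          simp [Finset.sum_sub_distrib, ← Finset.mul_sum, hxcol j, hcol j]
      have hseg : x ∈ openSegment ℝ (x + ε • d) (x - ε • d) := by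
        refine ⟨1/2, 1/2, by norm_num, by norm_num, by norm_num, ?_⟩
        module
      have h1 := hext hy hz hseg
      have : ε • d = 0 := by
        have := congrArg (fun w => w - x) h1
        simpa using this
      rcases smul_eq_zero.1 this with h | h
      · exact absurd h (ne_of_gt hε)
      · exact h
  · intro hD
    refine ⟨⟨hxpos, hxrow, hxcol⟩, ?_⟩
    rintro y ⟨hypos, hyrow, hycol⟩ z ⟨hzpos, hzrow, hzcol⟩ ⟨a, b, ha, hb, hab, habx⟩
    have hyz : y - z = 0 := by
      apply hD
      · intro i j hpos
        have hx0 : x i j = 0 := by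
          have := hxpos i j
          push_neg at hpos
          linarith
        have hyzval : a * y i j + b * z i j = 0 := by
          have := congrFun (congrFun habx i) j
          simpa [Matrix.add_apply, Matrix.smul_apply, smul_eq_mul, hx0] using this
        have hy0 : y i j = 0 := by nlinarith [hypos i j, hzpos i j]
        have hz0 : z i j = 0 := by nlinarith [hypos i j, hzpos i j]
        simp [Matrix.sub_apply, hy0, hz0]
      · intro i
        simp [Matrix.sub_apply, Finset.sum_sub_distrib, hyrow i, hzrow i]
      · intro j
        simp [Matrix.sub_apply, Finset.sum_sub_distrib, hycol j, hzcol j]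
    have hyzeq : y = z := by
      have := congrArg (fun w => w + z) hyz
      simpa using this
    have hxy : x = y := by
      rw [← habx, hyzeq, ← add_smul, hab, one_smul]
    exact hxy.symm


/-- In a generic transportation polytope, a point is a vertex iff its support has
exactly `p + q - 1` elements. -/
theorem generic_transportationPolytope_vertex_iff_support_card (p q : ℕ)
    (u : Fin p → ℝ) (v : Fin q → ℝ) (hu : ∀ i, 0 < u i) (hv : ∀ j, 0 < v j)
    (hsum : ∑ i, u i = ∑ j, v j)
    (hgen : ∀ (Y : Finset (Fin p)) (Z : Finset (Fin q)),
      Y.Nonempty → Y ≠ Finset.univ → Z.Nonempty → Z ≠ Finset.univ →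
      ∑ i ∈ Y, u i ≠ ∑ j ∈ Z, v j)
    (x : Matrix (Fin p) (Fin q) ℝ) (hx : x ∈ transportationPolytope p q u v) :
    x ∈ Set.extremePoints ℝ (transportationPolytope p q u v) ↔
      (Finset.univ.filter fun ij : Fin p × Fin q => 0 < x ij.1 ij.2).card = p + q - 1 := by
  classical
  rcases Nat.eq_zero_or_pos p with hp | hp
  · rcases Nat.eq_zero_or_pos q with hq | hq
    · subst hp; subst hq
      constructor
      · intro _
        simp
      · intro _
        refine ⟨hx, ?_⟩
        intro y hy z hz hseg
        funext i; exact i.elim0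
    · exfalso
      subst hp
      have h1 : (0:ℝ) < ∑ j, v j :=
        Finset.sum_pos (fun j _ => hv j) (univ_nonempty_iff.2 (Fin.pos_iff_nonempty.1 hq))
      rw [← hsum] at h1
      simp at h1
  · rcases Nat.eq_zero_or_pos q with hq | hq
    · exfalso
      subst hq
      have h1 : (0:ℝ) < ∑ i, u i :=
        Finset.sum_pos (fun i _ => hu i) (univ_nonempty_iff.2 (Fin.pos_iff_nonempty.1 hp))
      rw [hsum] at h1
      simp at h1
    · set S : Finset (Fin p × Fin q) := univ.filter fun ij => 0 < x ij.1 ij.2 with hSdef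
      have hmemS : ∀ i j, (i, j) ∈ S ↔ 0 < x i j := by intro i j; simp [hSdef]
      obtain ⟨hxpos, hxrow, hxcol⟩ := hx
      have hsplitpf : ∀ (Y : Finset (Fin p)) (Z : Finset (Fin q)),
          (∀ ij ∈ S, (ij.1 ∈ Y ↔ ij.2 ∈ Z)) → (Y = univ ∧ Z = univ) ∨ (Y = ∅ ∧ Z = ∅) := by
        intro Y Z hYZ
        have hzero1 : ∀ i ∈ Y, ∀ j, j ∉ Z → x i j = 0 := by
          intro i hi j hj
          by_contra hne
          have hpos : 0 < x i j := lt_of_le_of_ne (hxpos i j) (Ne.symm hne)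
          exact hj ((hYZ (i, j) ((hmemS i j).2 hpos)).1 hi)
        have hzero2 : ∀ i, i ∉ Y → ∀ j ∈ Z, x i j = 0 := by
          intro i hi j hj
          by_contra hne
          have hpos : 0 < x i j := lt_of_le_of_ne (hxpos i j) (Ne.symm hne)
          exact hi ((hYZ (i, j) ((hmemS i j).2 hpos)).2 hj)
        have hsums : ∑ i ∈ Y, u i = ∑ j ∈ Z, v j := by
          have h1 : ∑ i ∈ Y, u i = ∑ i ∈ Y, ∑ j ∈ Z, x i j := by
            refine Finset.sum_congr rfl fun i hi => ?_
            rw [← hxrow i]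
            exact (Finset.sum_subset (subset_univ Z) fun j _ hj => hzero1 i hi j hj).symm
          have h2 : ∑ j ∈ Z, v j = ∑ j ∈ Z, ∑ i ∈ Y, x i j := by
            refine Finset.sum_congr rfl fun j hj => ?_
            rw [← hxcol j]
            exact (Finset.sum_subset (subset_univ Y) fun i _ hi => hzero2 i hi j hj).symm
          rw [h1, h2, Finset.sum_comm]
        by_cases hY0 : Y = ∅
        · right
          refine ⟨hY0, ?_⟩
          by_contra hZ0
          have hZne : Z.Nonempty := Finset.nonempty_iff_ne_empty.2 hZ0
          have hpos : (0:ℝ) < ∑ j ∈ Z, v j := Finset.sum_pos (fun j _ => hv j) hZne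
          rw [← hsums, hY0] at hpos
          simp at hpos
        · left
          have hYne : Y.Nonempty := Finset.nonempty_iff_ne_empty.2 hY0
          by_cases hYu : Y = univ
          · refine ⟨hYu, ?_⟩
            by_contra hZu
            obtain ⟨j0, hj0⟩ : ∃ j, j ∉ Z := by
              by_contra hall
              push_neg at hall
              exact hZu (Finset.eq_univ_iff_forall.2 hall)
            have hlt : ∑ j ∈ Z, v j < ∑ j, v j :=
              Finset.sum_lt_sum_of_subset (subset_univ Z) (mem_univ j0) hj0 (hv j0)
                (fun j _ _ => (hv j).le)
            rw [← hsums, hYu, hsum] at hlt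
            exact lt_irrefl _ hlt
          · exfalso
            have hZne : Z.Nonempty := by
              by_contra hZ
              rw [Finset.not_nonempty_iff_eq_empty] at hZ
              have hpos : (0:ℝ) < ∑ i ∈ Y, u i := Finset.sum_pos (fun i _ => hu i) hYne
              rw [hsums, hZ] at hpos
              simp at hpos
            by_cases hZu : Z = univ
            · obtain ⟨i0, hi0⟩ : ∃ i, i ∉ Y := by
                by_contra hall
                push_neg at hall
                exact hYu (Finset.eq_univ_iff_forall.2 hall)
              have hlt : ∑ i ∈ Y, u i < ∑ i, u i :=
                Finset.sum_lt_sum_of_subset (subset_univ Y) (mem_univ i0) hi0 (hu i0)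
                  (fun i _ _ => (hu i).le)
              rw [hsums, hZu, ← hsum] at hlt
              exact lt_irrefl _ hlt
            · exact hgen Y Z hYne hYu hZne hZu hsums
      rw [extreme_iff_aux p q u v x ⟨hxpos, hxrow, hxcol⟩]
      rw [← key_lemma p q hp hq S hsplitpf]
      constructor
      · intro h d h1 h2 h3
        refine h d (fun i j hij => h1 i j ?_) h2 h3
        exact fun hmem => hij ((hmemS i j).1 hmem)
      · intro h d h1 h2 h3
        refine h d (fun i j hij => h1 i j ?_) h2 h3
        exact fun hpos => hij ((hmemS i j).2 hpos)
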